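/- Let K be a field of characteristic 0 with algebraic closure Ω, let L be an intermediate field of Ω/K with [L : K] = 2, and let g ∈ K[X] be irreducible over K. If the image of g in L[X] is reducible, then L is contained in the splitting field of g over K inside Ω. -/

import Mathlib

set_option maxHeartbeats 1000000


/-- Let `K` be a field of characteristic 0 with algebraic closure `Ω`, let `L` be an
intermediate field of `Ω/K` with `[L : K] = 2`, and let `g ∈ K[X]` be irreducible over
`K`. If the image of `g` in `L[X]` is reducible, then `L` is contained in the splitting
field of `g` over `K` inside `Ω` (the subfield generated over `K` by the roots of `g`). -/
theorem quadratic_subfield_le_splitting_field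
    (K Ω : Type) [Field K] [Field Ω] [Algebra K Ω] [IsAlgClosure K Ω] [CharZero K]
    (L : IntermediateField K Ω) (hL : Module.finrank K L = 2)
    (g : Polynomial K) (hg : Irreducible g)
    (hred : ¬ Irreducible (g.map (algebraMap K L))) :
    L ≤ IntermediateField.adjoin K (g.rootSet Ω) := by
  classical
  have hg0 : g ≠ 0 := hg.ne_zero
  have hgm0 : g.map (algebraMap K L) ≠ 0 := Polynomial.map_ne_zero hg0
  have hdeg : 0 < g.natDegree := hg.natDegree_pos
  have hnotunit : ¬ IsUnit (g.map (algebraMap K L)) := by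
    intro h
    have := Polynomial.natDegree_eq_zero_of_isUnit h
    rw [Polynomial.natDegree_map] at this
    omega
  rw [irreducible_iff, not_and] at hred
  have h2 := hred hnotunit
  push_neg at h2
  obtain ⟨a, b, hab, ha, hb⟩ := h2
  have ha0 : a ≠ 0 := by rintro rfl; simp at hab; exact hg0 hab
  have hb0 : b ≠ 0 := by rintro rfl; simp at hab; exact hg0 hab
  have hadeg : 0 < a.natDegree := by
    rcases Nat.eq_zero_or_pos a.natDegree with h | h
    · exact absurd (Polynomial.isUnit_iff_degree_eq_zero.mpr (by
        rw [Polynomial.degree_eq_natDegree ha0, h]; rfl)) ha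
    · exact h
  have hbdeg : 0 < b.natDegree := by
    rcases Nat.eq_zero_or_pos b.natDegree with h | h
    · exact absurd (Polynomial.isUnit_iff_degree_eq_zero.mpr (by
        rw [Polynomial.degree_eq_natDegree hb0, h]; rfl)) hb
    · exact h
  have hsum : a.natDegree + b.natDegree = g.natDegree := by
    rw [← Polynomial.natDegree_mul ha0 hb0, ← hab, Polynomial.natDegree_map]
  have halt : a.natDegree < g.natDegree := by omega
  -- find a root of a in Ω
  have : IsAlgClosed Ω := IsAlgClosure.isAlgClosed K
  obtain ⟨α, hα⟩ := IsAlgClosed.exists_root (a.map (algebraMap L Ω)) (by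
    rw [Polynomial.degree_map]
    intro h
    rw [Polynomial.degree_eq_natDegree ha0] at h
    exact absurd (by exact_mod_cast h) (by omega))
  have hαa : Polynomial.aeval α a = 0 := by rwa [Polynomial.aeval_def, Polynomial.eval₂_eq_eval_map]
  have hαg : Polynomial.aeval α g = 0 := by
    have : Polynomial.aeval α (g.map (algebraMap K L)) = 0 := by
      rw [hab]; simp [hαa]
    rwa [Polynomial.aeval_map_algebraMap] at this
  -- integrality
  have hαintK : IsIntegral K α := IsAlgebraic.isIntegral ⟨g, hg0, hαg⟩
  have hαintL : IsIntegral (↥L) α := IsAlgebraic.isIntegral ⟨a, ha0, hαa⟩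
  have hLfin : FiniteDimensional K (↥L) := FiniteDimensional.of_finrank_pos (by omega)
  have hEfin : FiniteDimensional (↥L) (IntermediateField.adjoin (↥L) ({α} : Set Ω)) :=
    IntermediateField.adjoin.finiteDimensional hαintL
  have hEfr : Module.finrank (↥L) (IntermediateField.adjoin (↥L) ({α} : Set Ω))
      = (minpoly (↥L) α).natDegree := IntermediateField.adjoin.finrank hαintL
  have hminle : (minpoly (↥L) α).natDegree ≤ a.natDegree :=
    Polynomial.natDegree_le_of_dvd (minpoly.dvd _ _ hαa) ha0
  have hKαle : IntermediateField.adjoin K ({α} : Set Ω)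
      ≤ (IntermediateField.adjoin (↥L) ({α} : Set Ω)).restrictScalars K := by
    rw [IntermediateField.adjoin_le_iff]
    exact Set.singleton_subset_iff.mpr (IntermediateField.subset_adjoin (↥L) _ rfl)
  have hKαfr : Module.finrank K (IntermediateField.adjoin K ({α} : Set Ω)) = g.natDegree := by
    rw [IntermediateField.adjoin.finrank hαintK, ← minpoly.eq_of_irreducible hg hαg]
    rw [Polynomial.natDegree_mul hg0 (by
      simpa using inv_ne_zero (Polynomial.leadingCoeff_ne_zero.mpr hg0)),
      Polynomial.natDegree_C, add_zero]
  have hFfin : FiniteDimensional K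
      ↥((IntermediateField.adjoin (↥L) ({α} : Set Ω)).restrictScalars K) :=
    FiniteDimensional.trans K (↥L) ↥(IntermediateField.adjoin (↥L) ({α} : Set Ω))
  have hFfr : Module.finrank K
      ↥((IntermediateField.adjoin (↥L) ({α} : Set Ω)).restrictScalars K)
      = 2 * Module.finrank (↥L) (IntermediateField.adjoin (↥L) ({α} : Set Ω)) := by
    have key : Module.finrank K ↥L * Module.finrank (↥L)
          ↥(IntermediateField.adjoin (↥L) ({α} : Set Ω))
        = Module.finrank K
          ↥((IntermediateField.adjoin (↥L) ({α} : Set Ω)).restrictScalars K) :=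
      by
        haveI : IsScalarTower K ↥L ↥(IntermediateField.adjoin (↥L) ({α} : Set Ω)) :=
          IntermediateField.isScalarTower _
        have h := Module.finrank_mul_finrank K (↥L) ↥(IntermediateField.adjoin (↥L) ({α} : Set Ω))
        exact h
    rw [hL] at key
    omega
  have hdvd := IntermediateField.finrank_bot_mul_relfinrank hKαle
  set d := Module.finrank K (IntermediateField.adjoin K ({α} : Set Ω)) with hd
  set D := Module.finrank K
      ↥((IntermediateField.adjoin (↥L) ({α} : Set Ω)).restrictScalars K) with hD
  have hDlt : D < 2 * g.natDegree := by
    rw [hFfr, hEfr]; omega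
  have hDpos : 0 < D := Module.finrank_pos
  have hr := hdvd
  set r := IntermediateField.relfinrank (IntermediateField.adjoin K ({α} : Set Ω))
      ((IntermediateField.adjoin (↥L) ({α} : Set Ω)).restrictScalars K) with hrdef
  have hDd : D = d := by
    have hr0 : r ≠ 0 := by
      intro h0
      rw [h0, Nat.mul_zero] at hr
      omega
    have hrlt : r < 2 := by
      by_contra hcon
      push_neg at hcon
      have h22 : d * 2 ≤ d * r := Nat.mul_le_mul_left d hcon
      rw [hr] at h22
      omega
    have h1 : r = 1 := by omega
    rw [← hr, h1, mul_one]
  have heq : IntermediateField.adjoin K ({α} : Set Ω)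
      = (IntermediateField.adjoin (↥L) ({α} : Set Ω)).restrictScalars K :=
    IntermediateField.eq_of_le_of_finrank_eq hKαle (by rw [← hd, ← hD, hDd])
  have hLle : L ≤ IntermediateField.adjoin K ({α} : Set Ω) := by
    intro x hx
    rw [heq]
    exact (IntermediateField.adjoin (↥L) ({α} : Set Ω)).algebraMap_mem ⟨x, hx⟩
  refine hLle.trans ?_
  rw [IntermediateField.adjoin_le_iff]
  exact Set.singleton_subset_iff.mpr
    (IntermediateField.subset_adjoin K _ ((Polynomial.mem_rootSet).mpr ⟨hg0, hαg⟩))
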